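/- For real numbers 0 < α < β, there is no scale ε satisfying simultaneously: lim_ω [1/((n+2)^α log(n+2))] / ε_n = 0 and lim_ω ε_n / [log(n+2)/(n+2)^α] = 0, and also lim_ω [1/((n+2)^β log(n+2))] / ε_n = 0 and lim_ω ε_n / [log(n+2)/(n+2)^β] = 0. In other words, the open intervals of scales I_α = ( (1/((n+2)^α log(n+2)))_n , ((log(n+2))/(n+2)^α)_n ), for α ∈ (0,∞), are pairwise disjoint; this yields an uncountable family of disjoint nonempty open sets in the order topology on scales, so the space of scales is not second countable. -/

import Mathlib

open Filter

/-- The ω-limit of a sequence in the compact space `[0,∞]`; for an ultrafilter this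
equals the `limsup` along the ultrafilter. -/
noncomputable def limw (ω : Ultrafilter ℕ) (a : ℕ → ENNReal) : ENNReal :=
  Filter.limsup a (ω : Filter ℕ)

/-- `lim_ω |z_n|^{η_n}` viewed in `[0,∞]`. -/
noncomputable def limNorm (ω : Ultrafilter ℕ) (η : ℕ → ℝ) (z : ℕ → ℂ) : ENNReal :=
  limw ω (fun n => ENNReal.ofReal (‖z n‖ ^ η n))

/-- A scale is a sequence with values in `(0,1]`. -/
def IsScale (η : ℕ → ℝ) : Prop := ∀ n, 0 < η n ∧ η n ≤ 1

/-- `lim_ω η_n / η'_n` in `[0,∞]`. -/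
noncomputable def scaleRatio (ω : Ultrafilter ℕ) (η η' : ℕ → ℝ) : ENNReal :=
  limw ω (fun n => ENNReal.ofReal (η n / η' n))

/-- `η ≤ η'` iff `lim_ω η_n/η'_n < ∞`. -/
def ScaleLE (ω : Ultrafilter ℕ) (η η' : ℕ → ℝ) : Prop := scaleRatio ω η η' ≠ ⊤

/-- `η < η'` iff `lim_ω η_n/η'_n = 0`. -/
def ScaleLT (ω : Ultrafilter ℕ) (η η' : ℕ → ℝ) : Prop := scaleRatio ω η η' = 0

/-- A scale is non-trivial if `lim_ω ε_n = 0`. -/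
def NontrivialScale (ω : Ultrafilter ℕ) (ε : ℕ → ℝ) : Prop :=
  limw ω (fun n => ENNReal.ofReal (ε n)) = 0

/-- Two scales are equivalent if `C⁻¹ η_n ≤ η'_n ≤ C η_n` ω-almost surely for some `C > 1`. -/
def ScaleEquiv (ω : Ultrafilter ℕ) (η η' : ℕ → ℝ) : Prop :=
  ∃ C : ℝ, 1 < C ∧ {n | C⁻¹ * η n ≤ η' n ∧ η' n ≤ C * η n} ∈ ω

/-- STATEMENT 15: for `0 < α < β`, no scale `ε` lies simultaneously in the open interval
`I_α = ( (1/((n+2)^α log(n+2)))_n , ((log(n+2))/(n+2)^α)_n )` and in `I_β`; i.e. these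
intervals are pairwise disjoint (whence the space of scales is not second countable). -/
theorem stmt15 (ω : Ultrafilter ℕ) (hω : ∀ s : Set ℕ, sᶜ.Finite → s ∈ ω) :
    ∀ α β : ℝ, 0 < α → α < β →
      ¬ ∃ ε : ℕ → ℝ, IsScale ε ∧
        limw ω (fun n => ENNReal.ofReal
          ((1 / (((n : ℝ) + 2) ^ α * Real.log ((n : ℝ) + 2))) / ε n)) = 0 ∧
        limw ω (fun n => ENNReal.ofReal
          (ε n / (Real.log ((n : ℝ) + 2) / ((n : ℝ) + 2) ^ α))) = 0 ∧
        limw ω (fun n => ENNReal.ofReal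
          ((1 / (((n : ℝ) + 2) ^ β * Real.log ((n : ℝ) + 2))) / ε n)) = 0 ∧
        limw ω (fun n => ENNReal.ofReal
          (ε n / (Real.log ((n : ℝ) + 2) / ((n : ℝ) + 2) ^ β))) = 0 := by
  intro α β hα hαβ
  rintro ⟨ε, hε, h1, _, _, h4⟩
  have hPpos : ∀ n : ℕ, (0:ℝ) < (n:ℝ) + 2 := fun n => by positivity
  have hL : ∀ n : ℕ, 0 < Real.log ((n:ℝ) + 2) := fun n =>
    Real.log_pos (by have : (0:ℝ) ≤ (n:ℝ) := Nat.cast_nonneg n; linarith)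
  -- extract ω-large sets from the limsup hypotheses
  have e1 : {n : ℕ | ENNReal.ofReal
      ((1 / (((n : ℝ) + 2) ^ α * Real.log ((n : ℝ) + 2))) / ε n) < 1} ∈ ω :=
    Filter.eventually_lt_of_limsup_lt
      (by rw [show Filter.limsup _ (ω : Filter ℕ) = limw ω _ from rfl, h1]; exact zero_lt_one)
  have e4 : {n : ℕ | ENNReal.ofReal
      (ε n / (Real.log ((n : ℝ) + 2) / ((n : ℝ) + 2) ^ β)) < 1} ∈ ω :=
    Filter.eventually_lt_of_limsup_lt
      (by rw [show Filter.limsup _ (ω : Filter ℕ) = limw ω _ from rfl, h4]; exact zero_lt_one)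
  -- eventual comparison: log(n+2)^2 ≤ (n+2)^(β-α)
  have hlittle := isLittleO_log_rpow_rpow_atTop 2 (show (0:ℝ) < β - α by linarith)
  have htend : Filter.Tendsto (fun x : ℝ => Real.log x ^ (2:ℝ) / x ^ (β - α))
      Filter.atTop (nhds 0) := hlittle.tendsto_div_nhds_zero
  have hcomp : Filter.Tendsto (fun n : ℕ => (n:ℝ) + 2) Filter.atTop Filter.atTop :=
    Filter.tendsto_atTop_add_const_right _ 2 tendsto_natCast_atTop_atTop
  have hev : ∀ᶠ n : ℕ in Filter.atTop,
      Real.log ((n:ℝ)+2) ^ (2:ℝ) / ((n:ℝ)+2) ^ (β - α) ≤ 1 := by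
    have := (htend.comp hcomp).eventually (eventually_le_nhds (show (0:ℝ) < 1 by norm_num))
    simpa using this
  obtain ⟨N, hN⟩ := Filter.eventually_atTop.1 hev
  have e3 : {n : ℕ | N ≤ n} ∈ ω := by
    apply hω
    apply (Set.finite_Iio N).subset
    intro x hx
    simp only [Set.mem_compl_iff, Set.mem_setOf_eq, not_le] at hx
    exact hx
  obtain ⟨n, ⟨hn1, hn4⟩, hn3⟩ := (ω : Filter ℕ).nonempty_of_mem
    (Filter.inter_mem (Filter.inter_mem e1 e4) e3)
  simp only [Set.mem_setOf_eq] at hn1 hn4 hn3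
  set P : ℝ := (n:ℝ) + 2 with hPdef
  have hP0 : (0:ℝ) < P := hPpos n
  have hL0 : (0:ℝ) < Real.log P := hL n
  have hPα : (0:ℝ) < P ^ α := Real.rpow_pos_of_pos hP0 α
  have hPβ : (0:ℝ) < P ^ β := Real.rpow_pos_of_pos hP0 β
  have hεn : (0:ℝ) < ε n := (hε n).1
  have hx : 1 / (P ^ α * Real.log P) < ε n := by
    have h := ENNReal.ofReal_lt_one.1 hn1
    rwa [div_lt_one hεn] at h
  have hy : ε n < Real.log P / P ^ β := by
    have h := ENNReal.ofReal_lt_one.1 hn4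
    rwa [div_lt_one (div_pos hL0 hPβ)] at h
  have hyx : Real.log P / P ^ β ≤ 1 / (P ^ α * Real.log P) := by
    have h2 := hN n hn3
    rw [div_le_one (Real.rpow_pos_of_pos hP0 _)] at h2
    rw [Real.rpow_sub hP0] at h2
    rw [div_le_div_iff₀ hPβ (mul_pos hPα hL0)]
    have h3 : Real.log P ^ (2:ℝ) * P ^ α ≤ P ^ β := by
      rw [← le_div_iff₀ hPα]; exact h2
    have h4 : Real.log P ^ (2:ℝ) = Real.log P * Real.log P := by
      rw [Real.rpow_two, sq]
    rw [h4] at h3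
    nlinarith
  linarith
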